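/- Finite-dimensional version of the contour identity: let A, B be n×n complex matrices, V ⊂ ℂ a bounded open set with smooth boundary containing a unique simple zero k♯ of det(A + (ω − k₀)B), with A + (ω − k₀)B invertible on ∂V and k₀ ∈ V. Then k♯ − k₀ = −(1/2πi) tr ∮_{∂V} (A + (ω − k₀)B)^{−1} A dω. -/

import Mathlib

open Metric

open Matrix Polynomial

/-- Jacobi's formula for the pencil `A + (z - k0) • B`. -/
lemma jacobiDeriv {n : ℕ} (A B : Matrix (Fin n) (Fin n) ℂ) (k0 ω : ℂ) :
    HasDerivAt (fun z : ℂ => (A + (z - k0) • B).det)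
      (Matrix.trace ((A + (ω - k0) • B).adjugate * B)) ω := by
  set M : Matrix (Fin n) (Fin n) ℂ := A + (ω - k0) • B with hM
  -- derivative of each permutation product
  have key : ∀ σ : Equiv.Perm (Fin n),
      HasDerivAt (fun z : ℂ => ∏ i, (A + (z - k0) • B) (σ i) i)
        (∑ k, (∏ j ∈ Finset.univ.erase k, M (σ j) j) * B (σ k) k) ω := by
    intro σ
    have h := HasDerivAt.finset_prod (x := ω) (u := (Finset.univ : Finset (Fin n)))
      (f := fun i (z : ℂ) => (A + (z - k0) • B) (σ i) i) (f' := fun i => B (σ i) i) ?_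
    · simpa [smul_eq_mul, hM, Finset.prod_fn] using h
    · intro i _
      have : HasDerivAt (fun z : ℂ => A (σ i) i + (z - k0) * B (σ i) i) (B (σ i) i) ω := by
        simpa using (((hasDerivAt_id ω).sub_const k0).mul_const (B (σ i) i)).const_add (A (σ i) i)
      simpa [Matrix.add_apply, Matrix.smul_apply, smul_eq_mul] using this
  have hdet : HasDerivAt (fun z : ℂ => (A + (z - k0) • B).det)
      (∑ σ : Equiv.Perm (Fin n), (Equiv.Perm.sign σ : ℂ) *
        ∑ k, (∏ j ∈ Finset.univ.erase k, M (σ j) j) * B (σ k) k) ω := by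
    have : (fun z : ℂ => (A + (z - k0) • B).det)
        = fun z : ℂ => ∑ σ : Equiv.Perm (Fin n),
            (Equiv.Perm.sign σ : ℂ) * ∏ i, (A + (z - k0) • B) (σ i) i := by
      funext z; rw [Matrix.det_apply]
      refine Finset.sum_congr rfl fun σ _ => ?_
      simp [Units.smul_def, zsmul_eq_mul]
    rw [this]
    exact HasDerivAt.fun_sum fun σ _ => (key σ).const_mul _
  convert hdet using 1
  -- rearrange to the trace of adjugate * B
  have swap : (∑ σ : Equiv.Perm (Fin n), (Equiv.Perm.sign σ : ℂ) *
        ∑ k, (∏ j ∈ Finset.univ.erase k, M (σ j) j) * B (σ k) k)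
      = ∑ k, (M.updateCol k (fun r => B r k)).det := by
    simp_rw [Finset.mul_sum]
    rw [Finset.sum_comm]
    refine Finset.sum_congr rfl fun k _ => ?_
    rw [Matrix.det_apply]
    refine Finset.sum_congr rfl fun σ _ => ?_
    have : (∏ i, (M.updateCol k fun r => B r k) (σ i) i)
        = (∏ j ∈ Finset.univ.erase k, M (σ j) j) * B (σ k) k := by
      rw [← Finset.mul_prod_erase (Finset.univ) _ (Finset.mem_univ k),
        Finset.prod_congr rfl (fun j hj => by
          rw [Matrix.updateCol_apply, if_neg (Finset.mem_erase.mp hj).1] :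
          ∀ j ∈ Finset.univ.erase k,
            (M.updateCol k fun r => B r k) (σ j) j = M (σ j) j),
        Matrix.updateCol_apply, if_pos rfl, mul_comm]
    rw [this, Units.smul_def, zsmul_eq_mul]
  rw [swap]
  rw [Matrix.trace]
  refine Finset.sum_congr rfl fun k _ => ?_
  rw [← Matrix.cramer_apply, Matrix.cramer_eq_adjugate_mulVec]
  simp [Matrix.mulVec, dotProduct, Matrix.mul_apply, Matrix.diag]

/-- matrix form of the contour identity of Proposition 2.5: if
det(A + (ω − k₀)B) has a unique, simple zero k♯ inside the contour, the pencil is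
invertible on the contour, and k₀ lies inside, then
k♯ − k₀ = −(1/2πi) tr ∮_{∂V} (A + (ω − k₀)B)⁻¹ A dω. -/
theorem stmt16 (n : ℕ) (A B : Matrix (Fin n) (Fin n) ℂ) (k0 ksharp c : ℂ) (R : ℝ)
    (hR : 0 < R) (hin : ksharp ∈ ball c R) (hk0 : k0 ∈ ball c R)
    (hzero : ∀ ω ∈ closedBall c R,
      (Matrix.det (A + (ω - k0) • B) = 0 ↔ ω = ksharp))
    (hsimple : deriv (fun ω : ℂ => Matrix.det (A + (ω - k0) • B)) ksharp ≠ 0) :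
    ksharp - k0 =
      -(1 / (2 * Real.pi * Complex.I)) *
        (∮ ω in C(c, R), Matrix.trace ((A + (ω - k0) • B)⁻¹ * A)) := by
  have hR0 : (0:ℝ) ≤ R := hR.le
  set F : Polynomial ℂ := (A.map C + (X - C k0) • B.map C).det with hFdef
  have heval : ∀ z : ℂ, F.eval z = Matrix.det (A + (z - k0) • B) := by
    intro z
    rw [hFdef, show eval z ((A.map C + (X - C k0) • B.map C).det)
        = (evalRingHom z) ((A.map C + (X - C k0) • B.map C).det) from rfl,
      RingHom.map_det, RingHom.mapMatrix_apply]
    congr 1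
    ext i j
    simp [Matrix.map_apply, Matrix.add_apply, Matrix.smul_apply, smul_eq_mul]
  have hfun : (fun x : ℂ => F.eval x) = fun x : ℂ => Matrix.det (A + (x - k0) • B) :=
    funext heval
  have hFd : ∀ z : ℂ, HasDerivAt (fun x : ℂ => Matrix.det (A + (x - k0) • B))
      (F.derivative.eval z) z := by
    intro z
    have := F.hasDerivAt z
    rwa [hfun] at this
  have htr : ∀ z : ℂ, Matrix.trace ((A + (z - k0) • B).adjugate * B) = F.derivative.eval z :=
    fun z => (jacobiDeriv A B k0 z).unique (hFd z)
  have hks_cb : ksharp ∈ closedBall c R := ball_subset_closedBall hin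
  have hroot : F.IsRoot ksharp := by
    rw [Polynomial.IsRoot, heval]; exact (hzero ksharp hks_cb).mpr rfl
  obtain ⟨G, hG⟩ := Polynomial.dvd_iff_isRoot.mpr hroot
  have hFd' : F.derivative = G + (X - C ksharp) * G.derivative := by
    rw [hG, derivative_mul]; simp
  have hGk : G.eval ksharp ≠ 0 := by
    intro h0
    apply hsimple
    rw [(hFd ksharp).deriv, hFd']
    simp [h0]
  have hfz : ∀ z : ℂ, Matrix.det (A + (z - k0) • B) = (z - ksharp) * G.eval z := by
    intro z; rw [← heval, hG]; simp
  have hGne : ∀ z ∈ closedBall c R, G.eval z ≠ 0 := by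
    intro z hz h0
    rcases eq_or_ne z ksharp with rfl | hne
    · exact hGk h0
    · exact hne ((hzero z hz).mp (by rw [hfz, h0, mul_zero]))
  have hsph_ne : ∀ z ∈ sphere c R, z ≠ ksharp := by
    intro z hz h
    subst h
    rw [mem_sphere] at hz
    exact absurd (mem_ball.mp hin) (by rw [hz]; exact lt_irrefl R)
  -- the two pieces of the integrand
  set h1 : ℂ → ℂ := fun z => (n:ℂ) - (z - k0) * G.derivative.eval z / G.eval z with hh1
  set h2 : ℂ → ℂ := fun z => (z - k0) / (z - ksharp) with hh2
  have hEq : Set.EqOn (fun ω => Matrix.trace ((A + (ω - k0) • B)⁻¹ * A))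
      (fun ω => h1 ω - h2 ω) (sphere c R) := by
    intro z hz
    have hzcb : z ∈ closedBall c R := sphere_subset_closedBall hz
    have hzne : z - ksharp ≠ 0 := sub_ne_zero.mpr (hsph_ne z hz)
    have hGz : G.eval z ≠ 0 := hGne z hzcb
    have hfz0 : Matrix.det (A + (z - k0) • B) ≠ 0 := by
      rw [hfz]; exact mul_ne_zero hzne hGz
    have hdet : IsUnit (A + (z - k0) • B).det := isUnit_iff_ne_zero.mpr hfz0
    have hMinv : (A + (z - k0) • B)⁻¹
        = ((A + (z - k0) • B).det)⁻¹ • (A + (z - k0) • B).adjugate := by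
      rw [Matrix.inv_def, Ring.inverse_eq_inv]
    have expand2 : (A + (z - k0) • B)⁻¹ * A + (z - k0) • ((A + (z - k0) • B)⁻¹ * B) = 1 := by
      rw [← Matrix.mul_smul, ← Matrix.mul_add]; exact Matrix.nonsing_inv_mul _ hdet
    have step0 : (A + (z - k0) • B)⁻¹ * A
        = 1 - (z - k0) • ((A + (z - k0) • B)⁻¹ * B) := eq_sub_of_add_eq expand2
    have step1 : Matrix.trace ((A + (z - k0) • B)⁻¹ * A)
        = (n : ℂ) - (z - k0) * Matrix.trace ((A + (z - k0) • B)⁻¹ * B) := by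
      rw [step0]
      simp [Matrix.trace_sub, Matrix.trace_smul, Matrix.trace_one, smul_eq_mul,
        Fintype.card_fin]
    have step2 : Matrix.trace ((A + (z - k0) • B)⁻¹ * B)
        = (Matrix.det (A + (z - k0) • B))⁻¹ * F.derivative.eval z := by
      rw [hMinv, Matrix.smul_mul, Matrix.trace_smul, htr, smul_eq_mul]
    show Matrix.trace ((A + (z - k0) • B)⁻¹ * A) = h1 z - h2 z
    rw [step1, step2, hfz, hFd']
    simp only [hh1, hh2, Polynomial.eval_add, Polynomial.eval_mul, Polynomial.eval_sub,
      Polynomial.eval_X, Polynomial.eval_C]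
    field_simp
    ring
  -- integrability
  have hGcont : Continuous fun z : ℂ => G.eval z := G.continuous
  have hG'cont : Continuous fun z : ℂ => G.derivative.eval z := G.derivative.continuous
  have h1contOn : ContinuousOn h1 (closedBall c R) := by
    refine continuousOn_const.sub (ContinuousOn.div ?_ hGcont.continuousOn hGne)
    exact ((continuousOn_id.sub continuousOn_const).mul hG'cont.continuousOn)
  have h1int : CircleIntegrable h1 c R :=
    (h1contOn.mono sphere_subset_closedBall).circleIntegrable hR0
  have h2contOn : ContinuousOn h2 (sphere c R) := by
    refine ContinuousOn.div (continuousOn_id.sub continuousOn_const)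
      (continuousOn_id.sub continuousOn_const) ?_
    intro z hz; exact sub_ne_zero.mpr (hsph_ne z hz)
  have h2int : CircleIntegrable h2 c R := h2contOn.circleIntegrable hR0
  -- ∮ h1 = 0 by Cauchy–Goursat
  have hint1 : (∮ z in C(c, R), h1 z) = 0 := by
    refine Complex.circleIntegral_eq_zero_of_differentiable_on_off_countable hR0
      Set.countable_empty h1contOn ?_
    rintro z ⟨hz, -⟩
    have hGz : G.eval z ≠ 0 := hGne z (ball_subset_closedBall hz)
    exact (differentiableAt_const _).sub
      (((differentiableAt_id.sub_const _).mul (G.derivative.differentiableAt)).div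
        G.differentiableAt hGz)
  -- ∮ h2 = 2πi (ksharp - k0)
  have hint2 : (∮ z in C(c, R), h2 z) = (2 * Real.pi * Complex.I) * (ksharp - k0) := by
    have hEq2 : Set.EqOn h2
        (fun z => (ksharp - k0) • (z - ksharp)⁻¹ - (fun _ : ℂ => (-1 : ℂ)) z)
        (sphere c R) := by
      intro z hz
      have hzne : z - ksharp ≠ 0 := sub_ne_zero.mpr (hsph_ne z hz)
      show (z - k0) / (z - ksharp) = (ksharp - k0) * (z - ksharp)⁻¹ - (-1)
      field_simp
      ring
    rw [circleIntegral.integral_congr hR0 hEq2]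
    have hconst : CircleIntegrable (fun _ : ℂ => (-1:ℂ)) c R :=
      (continuousOn_const).circleIntegrable hR0
    have hinv : CircleIntegrable (fun z : ℂ => (ksharp - k0) • (z - ksharp)⁻¹) c R := by
      refine ContinuousOn.circleIntegrable hR0 ?_
      refine ContinuousOn.smul (f := fun _ : ℂ => ksharp - k0) (g := fun z : ℂ => (z - ksharp)⁻¹)
        continuousOn_const (ContinuousOn.inv₀ (f := fun z : ℂ => z - ksharp)
        (continuousOn_id.sub continuousOn_const) ?_)
      intro z hz; exact sub_ne_zero.mpr (hsph_ne z hz)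
    have hc1 : (∮ _ in C(c, R), (-1:ℂ)) = 0 := by
      refine Complex.circleIntegral_eq_zero_of_differentiable_on_off_countable hR0
        Set.countable_empty continuousOn_const ?_
      rintro z ⟨-, -⟩; exact differentiableAt_const _
    rw [circleIntegral.integral_sub hinv hconst, circleIntegral.integral_smul,
      circleIntegral.integral_sub_inv_of_mem_ball hin, hc1]
    simp [smul_eq_mul]
    ring
  have hmain : (∮ ω in C(c, R), Matrix.trace ((A + (ω - k0) • B)⁻¹ * A))
      = -((2 * Real.pi * Complex.I) * (ksharp - k0)) := by
    rw [circleIntegral.integral_congr hR0 hEq, circleIntegral.integral_sub h1int h2int,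
      hint1, hint2, zero_sub]
  rw [hmain]
  have hne : (2 * Real.pi * Complex.I : ℂ) ≠ 0 := by
    simp [Real.pi_ne_zero, Complex.I_ne_zero, Complex.ofReal_ne_zero]
  field_simp
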